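/- Suppose F : [0,T] × ℝ^{n×n} → ℝ^{n×n} satisfies F(t, Yᵀ)ᵀ = −F(t, −Y) for all Y, and let S₀ ∈ ℝ^{r×r} be skew-symmetric, Y₀ = U₀S₀U₀ᵀ. Then in the new low-rank integrator the L-step solution satisfies L(t) = −K(t) for all t, hence one may take V₁ = U₁ and N = M, the S-step initial value MS₀Mᵀ is skew-symmetric, the right-hand side S ↦ U₁ᵀF(t, U₁SU₁ᵀ)U₁ maps skew-symmetric matrices to skew-symmetric matrices, and consequently Y₁ = U₁S₁U₁ᵀ is skew-symmetric. -/

import Mathlib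

attribute [local instance] Matrix.frobeniusNormedAddCommGroup Matrix.frobeniusNormedSpace

open Matrix

/-- Uniqueness of ODE solutions on a closed interval, from `HasDerivAt` hypotheses. -/
lemma ode_uniq' {E : Type*} [NormedAddCommGroup E] [NormedSpace ℝ E]
    {v : ℝ → E → E} {C : NNReal} (hv : ∀ t, LipschitzWith C (v t))
    {f g : ℝ → E} {a b : ℝ}
    (hf : ∀ t ∈ Set.Icc a b, HasDerivAt f (v t (f t)) t)
    (hg : ∀ t ∈ Set.Icc a b, HasDerivAt g (v t (g t)) t)
    (ha : f a = g a) : Set.EqOn f g (Set.Icc a b) :=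
  ODE_solution_unique hv
    (fun t ht => (hf t ht).continuousAt.continuousWithinAt)
    (fun t ht => (hf t (Set.Ico_subset_Icc_self ht)).hasDerivWithinAt)
    (fun t ht => (hg t ht).continuousAt.continuousWithinAt)
    (fun t ht => (hg t (Set.Ico_subset_Icc_self ht)).hasDerivWithinAt)
    ha

/-- skew-symmetry preservation of the new low-rank integrator when
`F(t,Yᵀ)ᵀ = −F(t,−Y)`. -/
theorem stmt11 {n r : ℕ} (t₀ t₁ : ℝ) (ht : t₀ ≤ t₁) (Lip : ℝ)
    (F : ℝ → Matrix (Fin n) (Fin n) ℝ → Matrix (Fin n) (Fin n) ℝ)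
    (hLip : ∀ t, ∀ Y Y' : Matrix (Fin n) (Fin n) ℝ, ‖F t Y - F t Y'‖ ≤ Lip * ‖Y - Y'‖)
    (hFskew : ∀ t, ∀ Y : Matrix (Fin n) (Fin n) ℝ, (F t Yᵀ)ᵀ = -F t (-Y))
    (U₀ : Matrix (Fin n) (Fin r) ℝ) (hU₀ : U₀ᵀ * U₀ = 1)
    (S₀ : Matrix (Fin r) (Fin r) ℝ) (hS₀ : S₀ᵀ = -S₀)
    -- K-step: K' = F(t, K U₀ᵀ) U₀, K(t₀) = U₀ S₀
    (K : ℝ → Matrix (Fin n) (Fin r) ℝ) (hK0 : K t₀ = U₀ * S₀)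
    (hKderiv : ∀ t ∈ Set.Icc t₀ t₁, HasDerivAt K (F t (K t * U₀ᵀ) * U₀) t)
    (hKcont : ContinuousOn K (Set.Icc t₀ t₁))
    -- L-step: L' = F(t, U₀ Lᵀ)ᵀ U₀, L(t₀) = U₀ S₀ᵀ
    (Lm : ℝ → Matrix (Fin n) (Fin r) ℝ) (hL0 : Lm t₀ = U₀ * S₀ᵀ)
    (hLderiv : ∀ t ∈ Set.Icc t₀ t₁, HasDerivAt Lm ((F t (U₀ * (Lm t)ᵀ))ᵀ * U₀) t)
    (hLcont : ContinuousOn Lm (Set.Icc t₀ t₁))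
    -- QR of K(t₁): K(t₁) = U₁ R₁; one takes V₁ = U₁ and N = M = U₁ᵀ U₀
    (U₁ : Matrix (Fin n) (Fin r) ℝ) (R₁ : Matrix (Fin r) (Fin r) ℝ)
    (hQR : K t₁ = U₁ * R₁) (hU₁ : U₁ᵀ * U₁ = 1)
    -- S-step with V₁ = U₁: S' = U₁ᵀ F(t, U₁ S U₁ᵀ) U₁, S(t₀) = M S₀ Mᵀ
    (S : ℝ → Matrix (Fin r) (Fin r) ℝ)
    (hSinit : S t₀ = (U₁ᵀ * U₀) * S₀ * (U₁ᵀ * U₀)ᵀ)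
    (hSderiv : ∀ t ∈ Set.Icc t₀ t₁, HasDerivAt S (U₁ᵀ * F t (U₁ * S t * U₁ᵀ) * U₁) t) :
    (∀ t ∈ Set.Icc t₀ t₁, Lm t = -K t) ∧
      ((U₁ᵀ * U₀) * S₀ * (U₁ᵀ * U₀)ᵀ)ᵀ = -((U₁ᵀ * U₀) * S₀ * (U₁ᵀ * U₀)ᵀ) ∧
      (∀ t, ∀ W : Matrix (Fin r) (Fin r) ℝ, Wᵀ = -W →
        (U₁ᵀ * F t (U₁ * W * U₁ᵀ) * U₁)ᵀ = -(U₁ᵀ * F t (U₁ * W * U₁ᵀ) * U₁)) ∧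
      (U₁ * S t₁ * U₁ᵀ)ᵀ = -(U₁ * S t₁ * U₁ᵀ) := by
  have hLip' : ∀ t, ∀ Y Y' : Matrix (Fin n) (Fin n) ℝ,
      ‖F t Y - F t Y'‖ ≤ max Lip 0 * ‖Y - Y'‖ := fun t Y Y' =>
    le_trans (hLip t Y Y') (mul_le_mul_of_nonneg_right (le_max_left _ _) (norm_nonneg _))
  have hLip0 : (0:ℝ) ≤ max Lip 0 := le_max_right _ _
  -- Part 1: Lm = -K on [t₀, t₁]
  have part1 : ∀ t ∈ Set.Icc t₀ t₁, Lm t = -K t := by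
    set v : ℝ → Matrix (Fin n) (Fin r) ℝ → Matrix (Fin n) (Fin r) ℝ :=
      fun t W => (F t (U₀ * Wᵀ))ᵀ * U₀ with hv_def
    have hvlip : ∀ t, LipschitzWith (Real.toNNReal (max Lip 0 * ‖U₀‖ * ‖U₀‖)) (v t) := by
      intro t
      apply LipschitzWith.of_dist_le_mul
      intro W W'
      rw [dist_eq_norm, dist_eq_norm]
      have h1 : v t W - v t W' = ((F t (U₀ * Wᵀ)) - (F t (U₀ * W'ᵀ)))ᵀ * U₀ := by
        simp only [hv_def]
        rw [transpose_sub, Matrix.sub_mul]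
      calc ‖v t W - v t W'‖
          = ‖((F t (U₀ * Wᵀ)) - (F t (U₀ * W'ᵀ)))ᵀ * U₀‖ := by rw [h1]
        _ ≤ ‖((F t (U₀ * Wᵀ)) - (F t (U₀ * W'ᵀ)))ᵀ‖ * ‖U₀‖ := frobenius_norm_mul _ _
        _ = ‖(F t (U₀ * Wᵀ)) - (F t (U₀ * W'ᵀ))‖ * ‖U₀‖ := by rw [frobenius_norm_transpose]
        _ ≤ (max Lip 0 * ‖U₀ * Wᵀ - U₀ * W'ᵀ‖) * ‖U₀‖ :=
            mul_le_mul_of_nonneg_right (hLip' t _ _) (norm_nonneg _)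
        _ = (max Lip 0 * ‖U₀ * (W - W')ᵀ‖) * ‖U₀‖ := by rw [← Matrix.mul_sub, ← transpose_sub]
        _ ≤ (max Lip 0 * (‖U₀‖ * ‖(W - W')ᵀ‖)) * ‖U₀‖ := by
            apply mul_le_mul_of_nonneg_right _ (norm_nonneg _)
            exact mul_le_mul_of_nonneg_left (frobenius_norm_mul _ _) hLip0
        _ = (max Lip 0 * ‖U₀‖ * ‖U₀‖) * ‖W - W'‖ := by rw [frobenius_norm_transpose]; ring
        _ ≤ (Real.toNNReal (max Lip 0 * ‖U₀‖ * ‖U₀‖) : ℝ) * ‖W - W'‖ :=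
            mul_le_mul_of_nonneg_right (Real.le_coe_toNNReal _) (norm_nonneg _)
    have hLm : ∀ t ∈ Set.Icc t₀ t₁, HasDerivAt Lm (v t (Lm t)) t := hLderiv
    have hnegK : ∀ t ∈ Set.Icc t₀ t₁, HasDerivAt (fun t => -K t) (v t (-K t)) t := by
      intro t htm
      have h := (hKderiv t htm).neg
      have heq : v t (-K t) = -(F t (K t * U₀ᵀ) * U₀) := by
        have hY := hFskew t (-(K t * U₀ᵀ))
        rw [neg_neg, transpose_neg, transpose_mul, transpose_transpose] at hY
        have h2 : U₀ * (-K t)ᵀ = -(U₀ * (K t)ᵀ) := by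
          rw [transpose_neg, Matrix.mul_neg]
        simp only [hv_def]
        rw [h2, hY, Matrix.neg_mul]
      rw [heq]
      exact h
    have hinit : Lm t₀ = -K t₀ := by
      rw [hL0, hK0, hS₀, Matrix.mul_neg]
    exact fun t htm => ode_uniq' hvlip hLm hnegK hinit htm
  -- Part 2: initial value of S-step is skew-symmetric
  have part2 : ((U₁ᵀ * U₀) * S₀ * (U₁ᵀ * U₀)ᵀ)ᵀ = -((U₁ᵀ * U₀) * S₀ * (U₁ᵀ * U₀)ᵀ) := by
    have e1 : ((U₁ᵀ * U₀) * S₀ * (U₁ᵀ * U₀)ᵀ)ᵀ = (U₁ᵀ * U₀) * S₀ᵀ * (U₁ᵀ * U₀)ᵀ := by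
      simp [Matrix.transpose_mul, Matrix.mul_assoc]
    rw [e1, hS₀]
    simp [Matrix.mul_neg, Matrix.neg_mul, Matrix.mul_assoc]
  -- Part 3: skew-symmetry of the S-step vector field
  have part3 : ∀ t, ∀ W : Matrix (Fin r) (Fin r) ℝ, Wᵀ = -W →
      (U₁ᵀ * F t (U₁ * W * U₁ᵀ) * U₁)ᵀ = -(U₁ᵀ * F t (U₁ * W * U₁ᵀ) * U₁) := by
    intro t W hW
    have hY := hFskew t (-(U₁ * W * U₁ᵀ))
    have h2 : (-(U₁ * W * U₁ᵀ))ᵀ = U₁ * W * U₁ᵀ := by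
      rw [transpose_neg, transpose_mul, transpose_mul, transpose_transpose, hW]
      simp [Matrix.mul_neg, Matrix.neg_mul, Matrix.mul_assoc]
    rw [h2, neg_neg] at hY
    rw [transpose_mul, transpose_mul, transpose_transpose, hY]
    simp [Matrix.mul_neg, Matrix.neg_mul, Matrix.mul_assoc]
  refine ⟨part1, part2, part3, ?_⟩
  -- Part 4: Y₁ is skew-symmetric, via uniqueness applied to -Sᵀ and S
  have skewS : -(S t₁)ᵀ = S t₁ := by
    set G : ℝ → Matrix (Fin r) (Fin r) ℝ → Matrix (Fin r) (Fin r) ℝ :=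
      fun t W => U₁ᵀ * F t (U₁ * W * U₁ᵀ) * U₁ with hG_def
    have hGlip : ∀ t,
        LipschitzWith (Real.toNNReal (max Lip 0 * ‖U₁‖ * ‖U₁‖ * ‖U₁‖ * ‖U₁‖)) (G t) := by
      intro t
      apply LipschitzWith.of_dist_le_mul
      intro W W'
      rw [dist_eq_norm, dist_eq_norm]
      have h1 : G t W - G t W' =
          U₁ᵀ * ((F t (U₁ * W * U₁ᵀ)) - (F t (U₁ * W' * U₁ᵀ))) * U₁ := by
        simp [hG_def, Matrix.mul_sub, Matrix.sub_mul]
      calc ‖G t W - G t W'‖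
          = ‖U₁ᵀ * ((F t (U₁ * W * U₁ᵀ)) - (F t (U₁ * W' * U₁ᵀ))) * U₁‖ := by rw [h1]
        _ ≤ ‖U₁ᵀ * ((F t (U₁ * W * U₁ᵀ)) - (F t (U₁ * W' * U₁ᵀ)))‖ * ‖U₁‖ :=
            frobenius_norm_mul _ _
        _ ≤ (‖U₁ᵀ‖ * ‖(F t (U₁ * W * U₁ᵀ)) - (F t (U₁ * W' * U₁ᵀ))‖) * ‖U₁‖ :=
            mul_le_mul_of_nonneg_right (frobenius_norm_mul _ _) (norm_nonneg _)
        _ ≤ (‖U₁ᵀ‖ * (max Lip 0 * ‖U₁ * W * U₁ᵀ - U₁ * W' * U₁ᵀ‖)) * ‖U₁‖ := by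
            apply mul_le_mul_of_nonneg_right _ (norm_nonneg _)
            exact mul_le_mul_of_nonneg_left (hLip' t _ _) (norm_nonneg _)
        _ = (‖U₁‖ * (max Lip 0 * ‖U₁ * (W - W') * U₁ᵀ‖)) * ‖U₁‖ := by
            rw [frobenius_norm_transpose, ← Matrix.sub_mul, ← Matrix.mul_sub]
        _ ≤ (‖U₁‖ * (max Lip 0 * (‖U₁ * (W - W')‖ * ‖U₁ᵀ‖))) * ‖U₁‖ := by
            apply mul_le_mul_of_nonneg_right _ (norm_nonneg _)
            apply mul_le_mul_of_nonneg_left _ (norm_nonneg _)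
            exact mul_le_mul_of_nonneg_left (frobenius_norm_mul _ _) hLip0
        _ ≤ (‖U₁‖ * (max Lip 0 * ((‖U₁‖ * ‖W - W'‖) * ‖U₁ᵀ‖))) * ‖U₁‖ := by
            apply mul_le_mul_of_nonneg_right _ (norm_nonneg _)
            apply mul_le_mul_of_nonneg_left _ (norm_nonneg _)
            exact mul_le_mul_of_nonneg_left
              (mul_le_mul_of_nonneg_right (frobenius_norm_mul _ _) (norm_nonneg _)) hLip0
        _ = (max Lip 0 * ‖U₁‖ * ‖U₁‖ * ‖U₁‖ * ‖U₁‖) * ‖W - W'‖ := by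
            rw [frobenius_norm_transpose]; ring
        _ ≤ (Real.toNNReal (max Lip 0 * ‖U₁‖ * ‖U₁‖ * ‖U₁‖ * ‖U₁‖) : ℝ) * ‖W - W'‖ :=
            mul_le_mul_of_nonneg_right (Real.le_coe_toNNReal _) (norm_nonneg _)
    -- f := -Sᵀ solves the same ODE as S
    have hf : ∀ t ∈ Set.Icc t₀ t₁,
        HasDerivAt (fun t => -(S t)ᵀ) (G t (-(S t)ᵀ)) t := by
      intro t htm
      have hT : HasDerivAt (fun t => -(S t)ᵀ)
          (-(U₁ᵀ * F t (U₁ * S t * U₁ᵀ) * U₁)ᵀ) t := by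
        let e : Matrix (Fin r) (Fin r) ℝ →L[ℝ] Matrix (Fin r) (Fin r) ℝ :=
          LinearMap.toContinuousLinearMap
            { toFun := fun W => -Wᵀ
              map_add' := by intro x y; simp [transpose_add, neg_add]; abel
              map_smul' := by intro c x; simp [transpose_smul] }
        have h := e.hasFDerivAt.comp_hasDerivAt t (hSderiv t htm)
        exact h
      have heq : G t (-(S t)ᵀ) = -(U₁ᵀ * F t (U₁ * S t * U₁ᵀ) * U₁)ᵀ := by
        have hY := hFskew t (U₁ * (S t)ᵀ * U₁ᵀ)
        have h3 : (U₁ * (S t)ᵀ * U₁ᵀ)ᵀ = U₁ * S t * U₁ᵀ := by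
          rw [transpose_mul, transpose_mul, transpose_transpose, transpose_transpose,
            Matrix.mul_assoc]
        rw [h3] at hY
        have h4 : U₁ * (-(S t)ᵀ) * U₁ᵀ = -(U₁ * (S t)ᵀ * U₁ᵀ) := by
          simp [Matrix.mul_neg, Matrix.neg_mul]
        have h5 : F t (-(U₁ * (S t)ᵀ * U₁ᵀ)) = -(F t (U₁ * S t * U₁ᵀ))ᵀ := by
          rw [hY, neg_neg]
        simp only [hG_def]
        rw [h4, h5, transpose_mul, transpose_mul, transpose_transpose]
        simp [Matrix.mul_neg, Matrix.neg_mul, Matrix.mul_assoc]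
      rw [heq]; exact hT
    have hg : ∀ t ∈ Set.Icc t₀ t₁, HasDerivAt S (G t (S t)) t := hSderiv
    have hinit : -(S t₀)ᵀ = S t₀ := by
      rw [hSinit, part2, neg_neg]
    have := ode_uniq' hGlip hf hg hinit ⟨ht, le_refl t₁⟩
    exact this
  have hsk : (S t₁)ᵀ = -(S t₁) := by simpa using congrArg Neg.neg skewS
  rw [transpose_mul, transpose_mul, transpose_transpose, hsk]
  simp [Matrix.mul_neg, Matrix.neg_mul, Matrix.mul_assoc]
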